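/- arXiv:nlin/0104036 — 4 statements merged into one kernel-verified Lean document; each statement's English description precedes it below -/
import Mathlib

section
/- Let X, Y : ℝ² → ℝ³ and H, K : ℝ² → ℝⁿ (row vectors) be smooth maps satisfying X_y = qY, Y_x = pX, H_y = pK, K_x = qH for smooth scalar functions p, q. Then the matrix-valued 1-form with R_x = X H and R_y = Y K is closed, i.e. (XH)_y = (YK)_x, so a potential matrix R : ℝ² → ℝ^{3×n} exists locally. -/
open Matrix

/-- If `X_y = q • Y`, `Y_x = p • X`, `H_y = p • K`, `K_x = q • H`,
then the matrix-valued 1-form `(X H, Y K)` (outer products) is closed: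
the `y`-derivative of `X H` and the `x`-derivative of `Y K` coincide. -/
theorem combescure_form_closed (n : ℕ)
    (X Y : ℝ → ℝ → Fin 3 → ℝ) (H K : ℝ → ℝ → Fin n → ℝ) (p q : ℝ → ℝ → ℝ)
    (hXy : ∀ x y, HasDerivAt (fun t => X x t) (q x y • Y x y) y)
    (hYx : ∀ x y, HasDerivAt (fun s => Y s y) (p x y • X x y) x)
    (hHy : ∀ x y, HasDerivAt (fun t => H x t) (p x y • K x y) y)
    (hKx : ∀ x y, HasDerivAt (fun s => K s y) (q x y • H x y) x) :
    ∀ x y, ∃ D : Fin 3 → Fin n → ℝ,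
      HasDerivAt (fun t => (fun i j => X x t i * H x t j)) D y ∧
      HasDerivAt (fun s => (fun i j => Y s y i * K s y j)) D x := by
  intro x y
  refine ⟨fun i j => q x y * Y x y i * H x y j + p x y * X x y i * K x y j, ?_, ?_⟩
  · rw [hasDerivAt_pi]
    intro i
    rw [hasDerivAt_pi]
    intro j
    have hX : HasDerivAt (fun t => X x t i) (q x y * Y x y i) y := by
      simpa using hasDerivAt_pi.mp (hXy x y) i
    have hH : HasDerivAt (fun t => H x t j) (p x y * K x y j) y := by
      simpa using hasDerivAt_pi.mp (hHy x y) j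
    have := hX.mul hH
    convert this using 1
    · rfl
    · rfl
    · ring
  · rw [hasDerivAt_pi]
    intro i
    rw [hasDerivAt_pi]
    intro j
    have hY : HasDerivAt (fun s => Y s y i) (p x y * X x y i) x := by
      simpa using hasDerivAt_pi.mp (hYx x y) i
    have hK : HasDerivAt (fun s => K s y j) (q x y * H x y j) x := by
      simpa using hasDerivAt_pi.mp (hKx x y) j
    have := hY.mul hK
    convert this using 1
    · rfl
    · rfl
    · ring
end

section
/- Let X, Y : ℝ² → ℝ³ satisfy X_y = pY, Y_x = pX (the Petot constraint p = q) and define the matrix R by R_x = XXᵀ, R_y = YYᵀ (compatible). Then for each κ, the metric coefficients satisfy the conservation law (|R_{κ,x}|²)_y = (|R_{κ,y}|²)_x, where R_κ denotes the κ-th column viewed as position vector, i.e. (|XXᵀe_κ|²)_y = (|YYᵀe_κ|²)_x. -/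
open Matrix

/-- Petot conservation laws: In the Petot setting `X_y = pY`,
`Y_x = pX` with `X, Y` orthonormal, for each `κ` the quantity
`|R_{κ,x}|² = X_κ²|X|²` and `|R_{κ,y}|² = Y_κ²|Y|²` satisfy the conservation law
`(X_κ²|X|²)_y = (Y_κ²|Y|²)_x`. -/
theorem petot_conservation_law (X Y : ℝ → ℝ → Fin 3 → ℝ) (p : ℝ → ℝ → ℝ)
    (hXy : ∀ x y, HasDerivAt (fun t => X x t) (p x y • Y x y) y)
    (hYx : ∀ x y, HasDerivAt (fun s => Y s y) (p x y • X x y) x)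
    (hX : ∀ x y, X x y ⬝ᵥ X x y = 1)
    (hY : ∀ x y, Y x y ⬝ᵥ Y x y = 1)
    (hXY : ∀ x y, X x y ⬝ᵥ Y x y = 0) :
    ∀ (κ : Fin 3) (x y : ℝ), ∃ d : ℝ,
      HasDerivAt (fun t => (X x t κ) ^ 2 * (X x t ⬝ᵥ X x t)) d y ∧
      HasDerivAt (fun s => (Y s y κ) ^ 2 * (Y s y ⬝ᵥ Y s y)) d x := by
  intro κ x y
  refine ⟨2 * p x y * X x y κ * Y x y κ, ?_, ?_⟩
  · have h1 : (fun t => (X x t κ) ^ 2 * (X x t ⬝ᵥ X x t)) = fun t => (X x t κ) ^ 2 := by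
      funext t; rw [hX x t, mul_one]
    rw [h1]
    have hk : HasDerivAt (fun t => X x t κ) ((p x y • Y x y) κ) y :=
      (hasDerivAt_pi.mp (hXy x y)) κ
    have := hk.fun_pow 2
    simp only [Pi.smul_apply, smul_eq_mul] at this
    refine this.congr_deriv ?_
    push_cast
    ring
  · have h1 : (fun s => (Y s y κ) ^ 2 * (Y s y ⬝ᵥ Y s y)) = fun s => (Y s y κ) ^ 2 := by
      funext s; rw [hY s y, mul_one]
    rw [h1]
    have hk : HasDerivAt (fun s => Y s y κ) ((p x y • X x y) κ) x :=
      (hasDerivAt_pi.mp (hYx x y)) κ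
    have := hk.fun_pow 2
    simp only [Pi.smul_apply, smul_eq_mul] at this
    refine this.congr_deriv ?_
    push_cast
    ring
end

section
/- (Fundamental transformation) Let X,Y : ℝ²→ℝ³, H,K : ℝ²→ℝⁿ satisfy X_y = qY, Y_x = pX, H_y = pK, K_x = qH; let scalar eigenfunctions X̃, Ỹ satisfy X̃_y = qỸ, Ỹ_x = pX̃ and adjoint eigenfunctions H̃, K̃ satisfy H̃_y = pK̃, K̃_x = qH̃; let M⃗ ∈ ℝ³, M̲ ∈ ℝⁿ, M ∈ ℝ be potentials with M⃗_x = X H̃, M⃗_y = Y K̃, M̲_x = X̃ H, M̲_y = Ỹ K, M_x = X̃ H̃, M_y = Ỹ K̃, with M nonvanishing. Then the primed quantities X' = X - X̃ M⃗ / M, Y' = Y - Ỹ M⃗ / M, H' = H - H̃ M̲ / M, K' = K - K̃ M̲ / M, p' = p - Ỹ H̃ / M, q' = q - X̃ K̃ / M again satisfy X'_y = q'Y', Y'_x = p'X', H'_y = p'K', K'_x = q'H'. -/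
open Matrix

private lemma fund_aux {E : Type*} [NormedAddCommGroup E] [NormedSpace ℝ E]
    {A B : ℝ → E} {a Mf : ℝ → ℝ} {x qv yv bv : ℝ} {Yv : E}
    (hA : HasDerivAt A (qv • Yv) x) (ha : HasDerivAt a (qv * yv) x)
    (hM : HasDerivAt Mf (yv * bv) x) (hB : HasDerivAt B (bv • Yv) x)
    (hM0 : Mf x ≠ 0) :
    HasDerivAt (fun t => A t - (a t / Mf t) • B t)
      ((qv - a x * bv / Mf x) • (Yv - (yv / Mf x) • B x)) x := by
  have h := hA.sub (((ha.div hM hM0).smul hB))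
  convert h using 1
  · rfl
  simp only [Pi.div_apply]
  match_scalars <;> field_simp <;> ring

/-- Fundamental transformation: Given solutions `X, Y, H, K` of
the linear systems, eigenfunctions `Xt, Yt`, adjoint eigenfunctions `Ht, Kt`,
and bilinear potentials `Mv, Mu, M` with `M ≠ 0`, the primed quantities
`X' = X - (Xt/M) Mv`, `Y' = Y - (Yt/M) Mv`, `H' = H - (Ht/M) Mu`,
`K' = K - (Kt/M) Mu`, `p' = p - Yt Ht/M`, `q' = q - Xt Kt/M`
again satisfy `X'_y = q' Y'`, `Y'_x = p' X'`, `H'_y = p' K'`, `K'_x = q' H'`. -/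
theorem fundamental_transformation (n : ℕ)
    (X Y : ℝ → ℝ → Fin 3 → ℝ) (H K : ℝ → ℝ → Fin n → ℝ)
    (Xt Yt Ht Kt M p q : ℝ → ℝ → ℝ)
    (Mv : ℝ → ℝ → Fin 3 → ℝ) (Mu : ℝ → ℝ → Fin n → ℝ)
    (hXy : ∀ x y, HasDerivAt (fun t => X x t) (q x y • Y x y) y)
    (hYx : ∀ x y, HasDerivAt (fun s => Y s y) (p x y • X x y) x)
    (hHy : ∀ x y, HasDerivAt (fun t => H x t) (p x y • K x y) y)
    (hKx : ∀ x y, HasDerivAt (fun s => K s y) (q x y • H x y) x)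
    (hXty : ∀ x y, HasDerivAt (fun t => Xt x t) (q x y * Yt x y) y)
    (hYtx : ∀ x y, HasDerivAt (fun s => Yt s y) (p x y * Xt x y) x)
    (hHty : ∀ x y, HasDerivAt (fun t => Ht x t) (p x y * Kt x y) y)
    (hKtx : ∀ x y, HasDerivAt (fun s => Kt s y) (q x y * Ht x y) x)
    (hMvx : ∀ x y, HasDerivAt (fun s => Mv s y) (Ht x y • X x y) x)
    (hMvy : ∀ x y, HasDerivAt (fun t => Mv x t) (Kt x y • Y x y) y)
    (hMux : ∀ x y, HasDerivAt (fun s => Mu s y) (Xt x y • H x y) x)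
    (hMuy : ∀ x y, HasDerivAt (fun t => Mu x t) (Yt x y • K x y) y)
    (hMx : ∀ x y, HasDerivAt (fun s => M s y) (Xt x y * Ht x y) x)
    (hMy : ∀ x y, HasDerivAt (fun t => M x t) (Yt x y * Kt x y) y)
    (hM0 : ∀ x y, M x y ≠ 0) :
    ∀ x y,
      HasDerivAt (fun t => X x t - (Xt x t / M x t) • Mv x t)
        ((q x y - Xt x y * Kt x y / M x y) •
          (Y x y - (Yt x y / M x y) • Mv x y)) y ∧
      HasDerivAt (fun s => Y s y - (Yt s y / M s y) • Mv s y)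
        ((p x y - Yt x y * Ht x y / M x y) •
          (X x y - (Xt x y / M x y) • Mv x y)) x ∧
      HasDerivAt (fun t => H x t - (Ht x t / M x t) • Mu x t)
        ((p x y - Yt x y * Ht x y / M x y) •
          (K x y - (Kt x y / M x y) • Mu x y)) y ∧
      HasDerivAt (fun s => K s y - (Kt s y / M s y) • Mu s y)
        ((q x y - Xt x y * Kt x y / M x y) •
          (H x y - (Ht x y / M x y) • Mu x y)) x := by
  intro x y
  refine ⟨fund_aux (hXy x y) (hXty x y) (hMy x y) (hMvy x y) (hM0 x y),
    fund_aux (hYx x y) (hYtx x y) (hMx x y) (hMvx x y) (hM0 x y), ?_, ?_⟩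
  · have := fund_aux (hHy x y) (hHty x y) ((hMy x y).congr_deriv (mul_comm _ _))
      (hMuy x y) (hM0 x y)
    rwa [mul_comm (Ht x y) (Yt x y)] at this
  · have := fund_aux (hKx x y) (hKtx x y) ((hMx x y).congr_deriv (mul_comm _ _))
      (hMux x y) (hM0 x y)
    rwa [mul_comm (Kt x y) (Xt x y)] at this
end

section
/- (Ribaucour constraint) In the setting of the Fundamental transformation with X·Y = 0, the choices X̃ = M⃗·X and Ỹ = M⃗·Y are eigenfunctions: (M⃗·X)_y = q (M⃗·Y) and (M⃗·Y)_x = p (M⃗·X). Moreover with these choices, (|M⃗|²)_x = 2M_x and (|M⃗|²)_y = 2M_y, so |M⃗|² - 2M is constant. -/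
open Matrix

lemma hasDerivAt_dot {f g : ℝ → Fin 3 → ℝ} {f' g' : Fin 3 → ℝ} {t : ℝ}
    (hf : HasDerivAt f f' t) (hg : HasDerivAt g g' t) :
    HasDerivAt (fun s => f s ⬝ᵥ g s) (f' ⬝ᵥ g t + f t ⬝ᵥ g') t := by
  simp only [dotProduct, Finset.sum_add_distrib.symm]
  exact HasDerivAt.fun_sum fun i _ =>
    ((hasDerivAt_pi.1 hf i).fun_mul (hasDerivAt_pi.1 hg i))

/-- Ribaucour constraint: With `X·Y = 0`, the choices
`Xt = Mv·X`, `Yt = Mv·Y` are eigenfunctions, and with these choices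
`(|Mv|²)_x = 2M_x`, `(|Mv|²)_y = 2M_y`, so `|Mv|² - 2M` is constant. -/
theorem ribaucour_constraint (X Y Mv : ℝ → ℝ → Fin 3 → ℝ)
    (Ht Kt M p q : ℝ → ℝ → ℝ)
    (hXy : ∀ x y, HasDerivAt (fun t => X x t) (q x y • Y x y) y)
    (hYx : ∀ x y, HasDerivAt (fun s => Y s y) (p x y • X x y) x)
    (hXY : ∀ x y, X x y ⬝ᵥ Y x y = 0)
    (hHty : ∀ x y, HasDerivAt (fun t => Ht x t) (p x y * Kt x y) y)
    (hKtx : ∀ x y, HasDerivAt (fun s => Kt s y) (q x y * Ht x y) x)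
    (hMvx : ∀ x y, HasDerivAt (fun s => Mv s y) (Ht x y • X x y) x)
    (hMvy : ∀ x y, HasDerivAt (fun t => Mv x t) (Kt x y • Y x y) y)
    (hMx : ∀ x y, HasDerivAt (fun s => M s y) ((Mv x y ⬝ᵥ X x y) * Ht x y) x)
    (hMy : ∀ x y, HasDerivAt (fun t => M x t) ((Mv x y ⬝ᵥ Y x y) * Kt x y) y) :
    ∀ x y,
      HasDerivAt (fun t => Mv x t ⬝ᵥ X x t) (q x y * (Mv x y ⬝ᵥ Y x y)) y ∧
      HasDerivAt (fun s => Mv s y ⬝ᵥ Y s y) (p x y * (Mv x y ⬝ᵥ X x y)) x ∧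
      HasDerivAt (fun s => Mv s y ⬝ᵥ Mv s y)
        (2 * ((Mv x y ⬝ᵥ X x y) * Ht x y)) x ∧
      HasDerivAt (fun t => Mv x t ⬝ᵥ Mv x t)
        (2 * ((Mv x y ⬝ᵥ Y x y) * Kt x y)) y ∧
      HasDerivAt (fun s => Mv s y ⬝ᵥ Mv s y - 2 * M s y) 0 x ∧
      HasDerivAt (fun t => Mv x t ⬝ᵥ Mv x t - 2 * M x t) 0 y := by
  intro x y
  have hYX : Y x y ⬝ᵥ X x y = 0 := by rw [dotProduct_comm]; exact hXY x y
  have h1 : HasDerivAt (fun t => Mv x t ⬝ᵥ X x t) (q x y * (Mv x y ⬝ᵥ Y x y)) y := by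
    have := hasDerivAt_dot (hMvy x y) (hXy x y)
    simpa [smul_dotProduct, dotProduct_smul, hYX, mul_comm] using this
  have h2 : HasDerivAt (fun s => Mv s y ⬝ᵥ Y s y) (p x y * (Mv x y ⬝ᵥ X x y)) x := by
    have := hasDerivAt_dot (hMvx x y) (hYx x y)
    simpa [smul_dotProduct, dotProduct_smul, hXY x y, mul_comm] using this
  have h3 : HasDerivAt (fun s => Mv s y ⬝ᵥ Mv s y)
      (2 * ((Mv x y ⬝ᵥ X x y) * Ht x y)) x := by
    have := hasDerivAt_dot (hMvx x y) (hMvx x y)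
    have e : (Ht x y • X x y) ⬝ᵥ Mv x y + Mv x y ⬝ᵥ (Ht x y • X x y)
        = 2 * ((Mv x y ⬝ᵥ X x y) * Ht x y) := by
      simp [smul_dotProduct, dotProduct_smul, dotProduct_comm (X x y)]; ring
    rwa [e] at this
  have h4 : HasDerivAt (fun t => Mv x t ⬝ᵥ Mv x t)
      (2 * ((Mv x y ⬝ᵥ Y x y) * Kt x y)) y := by
    have := hasDerivAt_dot (hMvy x y) (hMvy x y)
    have e : (Kt x y • Y x y) ⬝ᵥ Mv x y + Mv x y ⬝ᵥ (Kt x y • Y x y)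
        = 2 * ((Mv x y ⬝ᵥ Y x y) * Kt x y) := by
      simp [smul_dotProduct, dotProduct_smul, dotProduct_comm (Y x y)]; ring
    rwa [e] at this
  refine ⟨h1, h2, h3, h4, ?_, ?_⟩
  · simpa using h3.fun_sub ((hMx x y).const_mul 2)
  · simpa using h4.fun_sub ((hMy x y).const_mul 2)
end
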